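/- arXiv:1705.00133 — 3 statements merged into one kernel-verified Lean document; each statement's English description precedes it below -/
import Mathlib

section
/- (Up-to-bad, right.) Let μ₁ ∈ SubDist(A), μ₂ ∈ SubDist(B), θ ⊆ B, R ⊆ A × B. Suppose for all X ⊆ A, μ₁[X] ≤ e^ε μ₂[(θ_▷ ⟹ R)(X)] + δ, where (θ_▷ ⟹ R) = {(a,b) : b ∈ θ → (a,b) ∈ R}. Then for all X ⊆ A, μ₁[X] ≤ e^ε μ₂[R(X)] + δ + e^ε · μ₂[B∖θ]. -/
open scoped ENNReal

noncomputable section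

def mass {A : Type*} (μ : A → ℝ≥0∞) (X : Set A) : ℝ≥0∞ := ∑' x : X, μ x

def SubDist {A : Type*} (μ : A → ℝ≥0∞) : Prop := mass μ Set.univ ≤ 1

def dpDiv {B : Type*} (ε : ℝ) (μ ν : B → ℝ≥0∞) : ℝ≥0∞ :=
  ⨆ E : Set B, (mass μ E - ENNReal.ofReal (Real.exp ε) * mass ν E)

def relImage {A B : Type*} (R : A → B → Prop) (X : Set A) : Set B :=
  {b | ∃ a ∈ X, R a b}

def extL {A B : Type*} (η : A × Option B → ℝ≥0∞) : Option A × Option B → ℝ≥0∞ :=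
  fun p => p.1.elim 0 (fun a => η (a, p.2))

def extR {A B : Type*} (η : Option A × B → ℝ≥0∞) : Option A × Option B → ℝ≥0∞ :=
  fun p => p.2.elim 0 (fun b => η (p.1, b))

/-- The conditions for a pair `(ηL, ηR)` to witness an `(ε,δ)`-approximate ⋆-lifting
of `μ₁` and `μ₂` for the relation `R`.  Here `⋆` is represented by `none`. -/
def IsStarWitness {A B : Type*} (ε δ : ℝ) (μ₁ : A → ℝ≥0∞) (μ₂ : B → ℝ≥0∞)
    (R : A → B → Prop) (ηL : A × Option B → ℝ≥0∞) (ηR : Option A × B → ℝ≥0∞) : Prop :=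
  SubDist ηL ∧ SubDist ηR ∧
  (∀ a, (∑' b : Option B, ηL (a, b)) = μ₁ a) ∧
  (∀ b, (∑' a : Option A, ηR (a, b)) = μ₂ b) ∧
  (∀ a b, ηL (a, some b) ≠ 0 → R a b) ∧
  (∀ a b, ηR (some a, b) ≠ 0 → R a b) ∧
  dpDiv ε (extL ηL) (extR ηR) ≤ ENNReal.ofReal δ

/-- Existence of an `(ε,δ)`-approximate ⋆-lifting. -/
def StarLift {A B : Type*} (ε δ : ℝ) (μ₁ : A → ℝ≥0∞) (μ₂ : B → ℝ≥0∞)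
    (R : A → B → Prop) : Prop :=
  ∃ ηL ηR, IsStarWitness ε δ μ₁ μ₂ R ηL ηR


lemma mass_mono {A : Type*} (μ : A → ℝ≥0∞) {S T : Set A} (hST : S ⊆ T) :
    mass μ S ≤ mass μ T := by
  simp only [mass, tsum_subtype]
  exact ENNReal.tsum_le_tsum fun x => Set.indicator_le_indicator_of_subset hST (fun _ => zero_le) x

lemma mass_union_le {A : Type*} (μ : A → ℝ≥0∞) (S T : Set A) :
    mass μ (S ∪ T) ≤ mass μ S + mass μ T := by
  simp only [mass, tsum_subtype]
  rw [← ENNReal.tsum_add]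
  refine ENNReal.tsum_le_tsum fun x => ?_
  by_cases hS : x ∈ S
  · calc (S ∪ T).indicator μ x ≤ S.indicator μ x := by
          simp [Set.indicator_of_mem, hS, Set.indicator_of_mem (Set.mem_union_left T hS)]
        _ ≤ _ := le_self_add
  · by_cases hT : x ∈ T
    · calc (S ∪ T).indicator μ x ≤ T.indicator μ x := by
            simp [Set.indicator_of_mem, hT, Set.indicator_of_mem (Set.mem_union_right S hT)]
          _ ≤ _ := le_add_self
    · simp [Set.indicator_of_notMem, hS, hT, Set.indicator_of_notMem (fun hx => Or.elim hx hS hT)]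

theorem up_to_bad_right {A B : Type*} [Countable A] [Countable B]
    (μ₁ : A → ℝ≥0∞) (μ₂ : B → ℝ≥0∞) (h₁ : SubDist μ₁) (h₂ : SubDist μ₂)
    (θ : Set B) (R : A → B → Prop) (ε δ : ℝ) (hε : 0 ≤ ε) (hδ : 0 ≤ δ)
    (h : ∀ X : Set A,
      mass μ₁ X ≤ ENNReal.ofReal (Real.exp ε)
          * mass μ₂ (relImage (fun a b => b ∈ θ → R a b) X) + ENNReal.ofReal δ) :
    ∀ X : Set A,
      mass μ₁ X ≤ ENNReal.ofReal (Real.exp ε) * mass μ₂ (relImage R X)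
        + ENNReal.ofReal δ + ENNReal.ofReal (Real.exp ε) * mass μ₂ θᶜ := by
  intro X
  have hsub : relImage (fun a b => b ∈ θ → R a b) X ⊆ relImage R X ∪ θᶜ := by
    rintro b ⟨a, haX, hab⟩
    by_cases hb : b ∈ θ
    · exact Or.inl ⟨a, haX, hab hb⟩
    · exact Or.inr hb
  calc mass μ₁ X ≤ ENNReal.ofReal (Real.exp ε)
          * mass μ₂ (relImage (fun a b => b ∈ θ → R a b) X) + ENNReal.ofReal δ := h X
    _ ≤ ENNReal.ofReal (Real.exp ε) * (mass μ₂ (relImage R X) + mass μ₂ θᶜ)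
          + ENNReal.ofReal δ := by
        gcongr
        exact le_trans (mass_mono μ₂ hsub) (mass_union_le μ₂ _ _)
    _ = _ := by ring
end
end

section
/- (Equivalence of 1-liftings and ⋆-liftings.) Let μ₁ ∈ SubDist(A), μ₂ ∈ SubDist(B), R ⊆ A × B, ε, δ ≥ 0. There exists an (ε,δ)-approximate 1-lifting of μ₁ and μ₂ for R if and only if there exists an (ε,δ)-approximate ⋆-lifting of μ₁ and μ₂ for R. -/
open scoped ENNReal

noncomputable section

/-- Witness conditions for an -approximate 1-lifting. -/
def IsOneWitness {A B : Type*} (ε δ : ℝ) (μ₁ : A → ℝ≥0∞) (μ₂ : B → ℝ≥0∞)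
    (R : A → B → Prop) (μ : A × B → ℝ≥0∞) : Prop :=
  SubDist μ ∧
  (∀ a, (∑' b : B, μ (a, b)) ≤ μ₁ a) ∧
  (∀ b, (∑' a : A, μ (a, b)) ≤ μ₂ b) ∧
  dpDiv ε μ₁ (fun a => ∑' b : B, μ (a, b)) ≤ ENNReal.ofReal δ ∧
  (∀ a b, μ (a, b) ≠ 0 → R a b)

/-- Existence of an -approximate 1-lifting. -/
def OneLift {A B : Type*} (ε δ : ℝ) (μ₁ : A → ℝ≥0∞) (μ₂ : B → ℝ≥0∞)
    (R : A → B → Prop) : Prop :=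
  ∃ μ, IsOneWitness ε δ μ₁ μ₂ R μ


section Helpers

variable {A B γ : Type*}

lemma tsum_option_split (f : Option γ → ℝ≥0∞) :
    ∑' o : Option γ, f o = f none + ∑' c : γ, f (some c) := by
  classical
  have h1 : ∑' o : Option γ, f o
      = ∑' o : Option γ, ((if o = (none : Option γ) then f none else 0)
          + (Option.elim o 0 (fun c => f (some c)))) := by
    refine tsum_congr ?_
    rintro (_ | c) <;> simp
  rw [h1, ENNReal.tsum_add]
  congr 1
  · exact tsum_ite_eq none (fun _ => f none)
  · refine (Function.Injective.tsum_eq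
      (f := fun o : Option γ => Option.elim o 0 (fun c => f (some c)))
      (Option.some_injective γ) ?_).symm
    intro x hx
    rcases x with _ | c
    · simp [Function.mem_support] at hx
    · exact ⟨c, rfl⟩

lemma my_tsum_sub {ι : Type*} {f g : ι → ℝ≥0∞} (h1 : ∑' i, g i ≠ ∞) (h2 : ∀ i, g i ≤ f i) :
    ∑' i, (f i - g i) = ∑' i, f i - ∑' i, g i :=
  ENNReal.eq_sub_of_add_eq h1
    (by rw [← ENNReal.tsum_add]; exact tsum_congr fun i => tsub_add_cancel_of_le (h2 i))

lemma mass_ind (μ : A → ℝ≥0∞) (X : Set A) : mass μ X = ∑' x, X.indicator μ x :=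
  tsum_subtype X μ

lemma mass_univ' (μ : A → ℝ≥0∞) : mass μ Set.univ = ∑' x, μ x := tsum_univ μ

lemma dpDiv_le_iff {ε : ℝ} {μ ν : B → ℝ≥0∞} {d : ℝ≥0∞} :
    dpDiv ε μ ν ≤ d ↔
      ∀ E : Set B, mass μ E ≤ d + ENNReal.ofReal (Real.exp ε) * mass ν E := by
  rw [dpDiv, iSup_le_iff]
  exact forall_congr' fun E => tsub_le_iff_right

/-- Decomposition of the mass of a set in `Option A × Option B` when the indicator
vanishes on the `none` row. -/
lemma mass_option_decomp (g : Option A × Option B → ℝ≥0∞) (F : Set (Option A × Option B))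
    (h0 : ∀ ob, F.indicator g (none, ob) = 0) :
    mass g F = (∑' a, F.indicator g (some a, none))
      + ∑' a, ∑' b, F.indicator g (some a, some b) := by
  rw [mass_ind, ENNReal.tsum_prod',
    tsum_option_split (fun oa => ∑' ob, F.indicator g (oa, ob))]
  have : ∑' ob, F.indicator g ((none : Option A), ob) = 0 := by
    simp only [h0, tsum_zero]
  rw [this, zero_add]
  rw [← ENNReal.tsum_add]
  exact tsum_congr fun a => tsum_option_split (fun ob => F.indicator g (some a, ob))

lemma le_mass_option (g : Option A × Option B → ℝ≥0∞) (F : Set (Option A × Option B)) :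
    (∑' a, ∑' b, F.indicator g (some a, some b)) ≤ mass g F := by
  rw [mass_ind, ENNReal.tsum_prod',
    tsum_option_split (fun oa => ∑' ob, F.indicator g (oa, ob))]
  refine le_trans ?_ le_add_self
  refine ENNReal.tsum_le_tsum fun a => ?_
  rw [tsum_option_split (fun ob => F.indicator g (some a, ob))]
  exact le_add_self

end Helpers

lemma oneLift_to_starLift {A B : Type*}
    (μ₁ : A → ℝ≥0∞) (μ₂ : B → ℝ≥0∞) (h₁ : SubDist μ₁) (h₂ : SubDist μ₂)
    (R : A → B → Prop) (ε δ : ℝ) (hε : 0 ≤ ε)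
    (h : OneLift ε δ μ₁ μ₂ R) : StarLift ε δ μ₁ μ₂ R := by
  classical
  obtain ⟨μ, hsd, hm1, hm2, hdp, hsupp⟩ := h
  set k : ℝ≥0∞ := ENNReal.ofReal (Real.exp ε) with hk
  have hμ₁le : ∀ a, μ₁ a ≤ 1 := fun a =>
    (ENNReal.le_tsum a).trans (by rw [← mass_univ']; exact h₁)
  set π1 : A → ℝ≥0∞ := fun a => ∑' b, μ (a, b) with hπ1
  set π2 : B → ℝ≥0∞ := fun b => ∑' a, μ (a, b) with hπ2
  have hπ1le : ∀ a, π1 a ≤ μ₁ a := hm1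
  have hπ1ne : ∀ a, π1 a ≠ ∞ := fun a =>
    ne_top_of_le_ne_top ENNReal.one_ne_top ((hπ1le a).trans (hμ₁le a))
  set m : A → ℝ≥0∞ := fun a => min (μ₁ a) (k * π1 a) with hm
  set ηL : A × Option B → ℝ≥0∞ :=
    fun p => Option.elim p.2 (μ₁ p.1 - k * π1 p.1) (fun b => μ (p.1, b) * (m p.1 / π1 p.1))
    with hηL
  set ηR : Option A × B → ℝ≥0∞ :=
    fun p => Option.elim p.1 (μ₂ p.2 - π2 p.2) (fun a => μ (a, p.2)) with hηR
  have hηLnone : ∀ a, ηL (a, none) = μ₁ a - k * π1 a := fun a => by simp [hηL]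
  have hηLsome : ∀ a b, ηL (a, some b) = μ (a, b) * (m a / π1 a) := fun a b => by simp [hηL]
  have hηRnone : ∀ b, ηR (none, b) = μ₂ b - π2 b := fun b => by simp [hηR]
  have hηRsome : ∀ a b, ηR (some a, b) = μ (a, b) := fun a b => by simp [hηR]
  have hrow : ∀ a, (∑' b, ηL (a, some b)) = m a := by
    intro a
    simp_rw [hηLsome]
    rw [ENNReal.tsum_mul_right]
    by_cases h0 : π1 a = 0
    · rw [show (∑' b, μ (a, b)) = π1 a from rfl, h0, zero_mul, hm]
      simp [h0]
    · rw [show (∑' b, μ (a, b)) = π1 a from rfl]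
      exact ENNReal.mul_div_cancel h0 (hπ1ne a)
  have hrowL : ∀ a, (∑' ob : Option B, ηL (a, ob)) = μ₁ a := by
    intro a
    rw [tsum_option_split, hrow, hηLnone, hm]
    exact tsub_add_min
  have hkey : ∀ a b, ηL (a, some b) ≤ k * μ (a, b) := by
    intro a b
    rw [hηLsome, mul_comm k]
    exact mul_le_mul_right (ENNReal.div_le_of_le_mul (min_le_right _ _)) _
  have hcolR : ∀ b, (∑' oa : Option A, ηR (oa, b)) = μ₂ b := by
    intro b
    rw [tsum_option_split (fun oa => ηR (oa, b)), hηRnone]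
    simp_rw [hηRsome]
    exact tsub_add_cancel_of_le (hm2 b)
  unfold StarLift IsStarWitness
  refine ⟨ηL, ηR, ?_, ?_, hrowL, hcolR, ?_, ?_, ?_⟩
  · rw [SubDist, mass_univ', ENNReal.tsum_prod']
    calc (∑' a, ∑' ob, ηL (a, ob)) = ∑' a, μ₁ a := tsum_congr hrowL
      _ ≤ 1 := by rw [← mass_univ']; exact h₁
  · rw [SubDist, mass_univ', ENNReal.tsum_prod']
    calc (∑' oa, ∑' b, ηR (oa, b)) = ∑' b, ∑' oa, ηR (oa, b) := ENNReal.tsum_comm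
      _ = ∑' b, μ₂ b := tsum_congr hcolR
      _ ≤ 1 := by rw [← mass_univ']; exact h₂
  · intro a b hne
    refine hsupp a b fun hz => hne ?_
    rw [hηLsome, hz, zero_mul]
  · intro a b hne
    rw [hηRsome] at hne
    exact hsupp a b hne
  · rw [dpDiv_le_iff]
    intro F
    have hdp' := dpDiv_le_iff.mp hdp
    have h0 : ∀ ob, F.indicator (extL ηL) ((none : Option A), ob) = 0 := by
      intro ob
      by_cases hmem : ((none : Option A), ob) ∈ F
      · rw [Set.indicator_of_mem hmem]; rfl
      · exact Set.indicator_of_notMem hmem _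
    rw [mass_option_decomp _ _ h0]
    have hextL1 : ∀ a, extL ηL (some a, none) = μ₁ a - k * π1 a := fun a => hηLnone a
    set E'' : Set A := {a | (some a, none) ∈ F ∧ k * π1 a < μ₁ a} with hE''
    have hpart1 : (∑' a, F.indicator (extL ηL) (some a, none)) ≤ ENNReal.ofReal δ := by
      have heq1 : ∀ a, F.indicator (extL ηL) (some a, none)
          = E''.indicator μ₁ a - E''.indicator (fun a => k * π1 a) a := by
        intro a
        by_cases hmem : (some a, none) ∈ F
        · by_cases hlt : k * π1 a < μ₁ a
          · have haE : a ∈ E'' := ⟨hmem, hlt⟩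
            rw [Set.indicator_of_mem hmem, Set.indicator_of_mem haE, Set.indicator_of_mem haE]
            exact hextL1 a
          · have haE : a ∉ E'' := fun hc => hlt hc.2
            rw [Set.indicator_of_mem hmem, Set.indicator_of_notMem haE,
              Set.indicator_of_notMem haE, tsub_zero, hextL1 a]
            exact tsub_eq_zero_of_le (not_lt.mp hlt)
        · have haE : a ∉ E'' := fun hc => hmem hc.1
          rw [Set.indicator_of_notMem hmem, Set.indicator_of_notMem haE,
            Set.indicator_of_notMem haE, tsub_zero]
      have hgle : ∀ a, E''.indicator (fun a => k * π1 a) a ≤ E''.indicator μ₁ a := by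
        intro a
        by_cases haE : a ∈ E''
        · rw [Set.indicator_of_mem haE, Set.indicator_of_mem haE]; exact le_of_lt haE.2
        · rw [Set.indicator_of_notMem haE, Set.indicator_of_notMem haE]
      have hfin : (∑' a, E''.indicator (fun a => k * π1 a) a) ≠ ∞ := by
        refine ne_top_of_le_ne_top ENNReal.one_ne_top ?_
        refine le_trans (ENNReal.tsum_le_tsum hgle) ?_
        refine le_trans (ENNReal.tsum_le_tsum fun a => Set.indicator_le_self _ _ a) ?_
        rw [← mass_univ']; exact h₁
      calc (∑' a, F.indicator (extL ηL) (some a, none))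
          = ∑' a, (E''.indicator μ₁ a - E''.indicator (fun a => k * π1 a) a) :=
            tsum_congr heq1
        _ = (∑' a, E''.indicator μ₁ a) - ∑' a, E''.indicator (fun a => k * π1 a) a :=
            my_tsum_sub hfin hgle
        _ = mass μ₁ E'' - k * mass π1 E'' := by
            rw [← mass_ind]
            congr 1
            rw [mass_ind, ← ENNReal.tsum_mul_left]
            refine tsum_congr fun a => ?_
            by_cases haE : a ∈ E''
            · rw [Set.indicator_of_mem haE, Set.indicator_of_mem haE]
            · rw [Set.indicator_of_notMem haE, Set.indicator_of_notMem haE, mul_zero]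
        _ ≤ ENNReal.ofReal δ := tsub_le_iff_right.mpr (hdp' E'')
    have hpart2 : (∑' a, ∑' b, F.indicator (extL ηL) (some a, some b))
        ≤ k * mass (extR ηR) F := by
      have hle : ∀ a b, F.indicator (extL ηL) (some a, some b)
          ≤ k * F.indicator (extR ηR) (some a, some b) := by
        intro a b
        by_cases hmem : (some a, some b) ∈ F
        · rw [Set.indicator_of_mem hmem, Set.indicator_of_mem hmem]
          show ηL (a, some b) ≤ k * ηR (some a, b)
          rw [hηRsome]
          exact hkey a b
        · rw [Set.indicator_of_notMem hmem, Set.indicator_of_notMem hmem, mul_zero]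
      calc (∑' a, ∑' b, F.indicator (extL ηL) (some a, some b))
          ≤ ∑' a, ∑' b, k * F.indicator (extR ηR) (some a, some b) :=
            ENNReal.tsum_le_tsum fun a => ENNReal.tsum_le_tsum fun b => hle a b
        _ = k * ∑' a, ∑' b, F.indicator (extR ηR) (some a, some b) := by
            simp_rw [ENNReal.tsum_mul_left]
        _ ≤ k * mass (extR ηR) F := mul_le_mul_right (le_mass_option _ _) _
    exact add_le_add hpart1 hpart2

lemma starLift_to_oneLift {A B : Type*}
    (μ₁ : A → ℝ≥0∞) (μ₂ : B → ℝ≥0∞) (h₁ : SubDist μ₁) (h₂ : SubDist μ₂)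
    (R : A → B → Prop) (ε δ : ℝ) (hε : 0 ≤ ε)
    (h : StarLift ε δ μ₁ μ₂ R) : OneLift ε δ μ₁ μ₂ R := by
  classical
  obtain ⟨ηL, ηR, hL, hR, hm1, hm2, hs1, hs2, hdp⟩ := h
  set k : ℝ≥0∞ := ENNReal.ofReal (Real.exp ε) with hk
  have hk1 : 1 ≤ k := by
    rw [hk, ← ENNReal.ofReal_one]
    exact ENNReal.ofReal_le_ofReal (Real.one_le_exp hε)
  set μ0 : A × B → ℝ≥0∞ := fun p => min (ηL (p.1, some p.2)) (ηR (some p.1, p.2)) with hμ0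
  have hμ0app : ∀ a b, μ0 (a, b) = min (ηL (a, some b)) (ηR (some a, b)) := fun a b => rfl
  have hrowle : ∀ a, (∑' b, ηL (a, some b)) ≤ μ₁ a := by
    intro a
    rw [← hm1 a, tsum_option_split (fun ob => ηL (a, ob))]
    exact le_add_self
  have hcolle : ∀ b, (∑' a, ηR (some a, b)) ≤ μ₂ b := by
    intro b
    rw [← hm2 b, tsum_option_split (fun oa => ηR (oa, b))]
    exact le_add_self
  set S : A → Set B := fun a => {b | ηR (some a, b) < ηL (a, some b)} with hS
  unfold OneLift IsOneWitness
  refine ⟨μ0, ?_, ?_, ?_, ?_, ?_⟩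
  · rw [SubDist, mass_univ', ENNReal.tsum_prod']
    calc (∑' a, ∑' b, μ0 (a, b)) ≤ ∑' a, ∑' b, ηL (a, some b) :=
          ENNReal.tsum_le_tsum fun a => ENNReal.tsum_le_tsum fun b => min_le_left _ _
      _ ≤ ∑' a, μ₁ a := ENNReal.tsum_le_tsum hrowle
      _ ≤ 1 := by rw [← mass_univ']; exact h₁
  · intro a
    calc (∑' b, μ0 (a, b)) ≤ ∑' b, ηL (a, some b) :=
          ENNReal.tsum_le_tsum fun b => min_le_left _ _
      _ ≤ μ₁ a := hrowle a
  · intro b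
    calc (∑' a, μ0 (a, b)) ≤ ∑' a, ηR (some a, b) :=
          ENNReal.tsum_le_tsum fun a => min_le_right _ _
      _ ≤ μ₂ b := hcolle b
  · -- dpDiv bound
    rw [dpDiv_le_iff]
    intro E
    set F : Set (Option A × Option B) :=
      {p | ∃ a ∈ E, p.1 = some a ∧ (p.2 = none ∨ ∃ b ∈ S a, p.2 = some b)} with hF
    have hF1 : ∀ a, ((some a, none) : Option A × Option B) ∈ F ↔ a ∈ E := by
      intro a
      constructor
      · rintro ⟨a', ha', h1, -⟩
        have := Option.some_inj.mp h1
        subst this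
        exact ha'
      · intro ha; exact ⟨a, ha, rfl, Or.inl rfl⟩
    have hF2 : ∀ a b, ((some a, some b) : Option A × Option B) ∈ F ↔ (a ∈ E ∧ b ∈ S a) := by
      intro a b
      constructor
      · rintro ⟨a', ha', h1, h2 | ⟨b', hb', h3⟩⟩
        · exact absurd h2 (by simp)
        · have ha'' := Option.some_inj.mp h1
          subst ha''
          have hb'' := Option.some_inj.mp h3
          subst hb''
          exact ⟨ha', hb'⟩
      · rintro ⟨ha, hb⟩; exact ⟨a, ha, rfl, Or.inr ⟨b, hb, rfl⟩⟩
    have hF0 : ∀ ob, ((none : Option A), ob) ∉ F := by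
      rintro ob ⟨a', -, h1, -⟩
      simp at h1
    have hdp' := dpDiv_le_iff.mp hdp
    have hdecompL := mass_option_decomp (extL ηL) F
      (fun ob => Set.indicator_of_notMem (hF0 ob) _)
    have hdecompR := mass_option_decomp (extR ηR) F
      (fun ob => Set.indicator_of_notMem (hF0 ob) _)
    have hRnone : ∀ a, F.indicator (extR ηR) ((some a : Option A), none) = 0 := by
      intro a
      by_cases hmem : ((some a : Option A), (none : Option B)) ∈ F
      · rw [Set.indicator_of_mem hmem]; rfl
      · exact Set.indicator_of_notMem hmem _
    have hmassR : mass (extR ηR) F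
        = ∑' a, ∑' b, F.indicator (extR ηR) (some a, some b) := by
      rw [hdecompR]
      simp [hRnone]
    -- identify the pair terms with μ0
    have hWval : ∀ a b, F.indicator (extR ηR) (some a, some b)
        = if a ∈ E ∧ b ∈ S a then μ0 (a, b) else 0 := by
      intro a b
      by_cases hmem : (a ∈ E ∧ b ∈ S a)
      · rw [Set.indicator_of_mem ((hF2 a b).mpr hmem), if_pos hmem, hμ0app,
          min_eq_right (le_of_lt hmem.2)]
        rfl
      · rw [Set.indicator_of_notMem (fun hc => hmem ((hF2 a b).mp hc)), if_neg hmem]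
    have hT3val : ∀ a b, (if a ∈ E ∧ b ∈ (S a)ᶜ then ηL (a, some b) else 0)
        = if a ∈ E ∧ b ∈ (S a)ᶜ then μ0 (a, b) else 0 := by
      intro a b
      by_cases hc : a ∈ E ∧ b ∈ (S a)ᶜ
      · have hb' : ¬ ηR (some a, b) < ηL (a, some b) := fun hlt =>
          hc.2 (show b ∈ S a from by simp only [hS]; exact hlt)
        rw [if_pos hc, if_pos hc, hμ0app, min_eq_left (not_lt.mp hb')]
      · rw [if_neg hc, if_neg hc]
    -- decomposition of mass μ₁ E
    have hsplit : ∀ a, E.indicator μ₁ a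
        = F.indicator (extL ηL) (some a, none)
          + ((∑' b, F.indicator (extL ηL) (some a, some b))
            + ∑' b, (if a ∈ E ∧ b ∈ (S a)ᶜ then ηL (a, some b) else 0)) := by
      intro a
      by_cases ha : a ∈ E
      · rw [Set.indicator_of_mem ha, Set.indicator_of_mem ((hF1 a).mpr ha)]
        have hb1 : ∀ b, F.indicator (extL ηL) (some a, some b)
            = if b ∈ S a then ηL (a, some b) else 0 := by
          intro b
          by_cases hb : b ∈ S a
          · rw [Set.indicator_of_mem ((hF2 a b).mpr ⟨ha, hb⟩), if_pos hb]; rfl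
          · rw [Set.indicator_of_notMem (fun hc => hb ((hF2 a b).mp hc).2), if_neg hb]
        have hb2 : ∀ b, (if a ∈ E ∧ b ∈ (S a)ᶜ then ηL (a, some b) else 0)
            = if b ∈ S a then 0 else ηL (a, some b) := by
          intro b
          by_cases hb : b ∈ S a
          · rw [if_neg (fun hc => hc.2 hb), if_pos hb]
          · rw [if_pos ⟨ha, hb⟩, if_neg hb]
        calc μ₁ a = ηL (a, none) + ∑' b, ηL (a, some b) := by
              rw [← hm1 a, tsum_option_split (fun ob => ηL (a, ob))]
          _ = extL ηL (some a, none)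
              + ((∑' b, F.indicator (extL ηL) (some a, some b))
                + ∑' b, (if a ∈ E ∧ b ∈ (S a)ᶜ then ηL (a, some b) else 0)) := by
              congr 1
              rw [← ENNReal.tsum_add]
              refine tsum_congr fun b => ?_
              rw [hb1, hb2]
              by_cases hb : b ∈ S a
              · rw [if_pos hb, if_pos hb, add_zero]
              · rw [if_neg hb, if_neg hb, zero_add]
      · rw [Set.indicator_of_notMem ha,
          Set.indicator_of_notMem (fun hc => ha ((hF1 a).mp hc))]
        have hb1 : ∀ b, F.indicator (extL ηL) (some a, some b) = 0 :=
          fun b => Set.indicator_of_notMem (fun hc => ha ((hF2 a b).mp hc).1) _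
        have hb2 : ∀ b, (if a ∈ E ∧ b ∈ (S a)ᶜ then ηL (a, some b) else 0) = 0 :=
          fun b => if_neg (fun hc => ha hc.1)
        rw [tsum_congr hb1, tsum_congr hb2]
        simp
    have hmassE : mass μ₁ E
        = mass (extL ηL) F
          + ∑' a, ∑' b, (if a ∈ E ∧ b ∈ (S a)ᶜ then ηL (a, some b) else 0) := by
      rw [mass_ind, hdecompL]
      rw [show (∑' a, E.indicator μ₁ a)
          = ∑' a, (F.indicator (extL ηL) (some a, none)
            + ((∑' b, F.indicator (extL ηL) (some a, some b))
              + ∑' b, (if a ∈ E ∧ b ∈ (S a)ᶜ then ηL (a, some b) else 0)))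
        from tsum_congr hsplit]
      rw [ENNReal.tsum_add, ENNReal.tsum_add, add_assoc]
    -- recombination
    have hcomb : (∑' a, ∑' b, F.indicator (extR ηR) (some a, some b))
        + (∑' a, ∑' b, (if a ∈ E ∧ b ∈ (S a)ᶜ then ηL (a, some b) else 0))
        = mass (fun a => ∑' b, μ0 (a, b)) E := by
      rw [← ENNReal.tsum_add, mass_ind]
      refine tsum_congr fun a => ?_
      rw [← ENNReal.tsum_add]
      by_cases ha : a ∈ E
      · rw [Set.indicator_of_mem ha]
        refine tsum_congr fun b => ?_
        rw [hWval, hT3val]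
        by_cases hb : b ∈ S a
        · rw [if_pos ⟨ha, hb⟩, if_neg (fun hc => hc.2 hb), add_zero]
        · rw [if_neg (fun hc => hb hc.2), if_pos ⟨ha, hb⟩, zero_add]
      · rw [Set.indicator_of_notMem ha]
        have : ∀ b, F.indicator (extR ηR) (some a, some b)
            + (if a ∈ E ∧ b ∈ (S a)ᶜ then ηL (a, some b) else 0) = 0 := by
          intro b
          rw [hWval, if_neg (fun hc => ha hc.1), if_neg (fun hc => ha hc.1), add_zero]
        rw [tsum_congr this, tsum_zero]
    -- final chain
    calc mass μ₁ E
        = mass (extL ηL) F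
          + ∑' a, ∑' b, (if a ∈ E ∧ b ∈ (S a)ᶜ then ηL (a, some b) else 0) := hmassE
      _ ≤ (ENNReal.ofReal δ + k * mass (extR ηR) F)
          + ∑' a, ∑' b, (if a ∈ E ∧ b ∈ (S a)ᶜ then ηL (a, some b) else 0) :=
            add_le_add_left (hdp' F) _
      _ = ENNReal.ofReal δ
          + (k * (∑' a, ∑' b, F.indicator (extR ηR) (some a, some b))
            + ∑' a, ∑' b, (if a ∈ E ∧ b ∈ (S a)ᶜ then ηL (a, some b) else 0)) := by
            rw [hmassR, add_assoc]
      _ ≤ ENNReal.ofReal δ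
          + (k * (∑' a, ∑' b, F.indicator (extR ηR) (some a, some b))
            + k * ∑' a, ∑' b, (if a ∈ E ∧ b ∈ (S a)ᶜ then ηL (a, some b) else 0)) := by
            refine add_le_add_right (add_le_add_right ?_ _) _
            exact le_mul_of_one_le_left zero_le hk1
      _ = ENNReal.ofReal δ + k * mass (fun a => ∑' b, μ0 (a, b)) E := by
            rw [← mul_add, hcomb]
  · intro a b hne
    refine hs1 a b fun hz => hne ?_
    rw [hμ0app, hz]
    simp

theorem oneLift_iff_starLift {A B : Type*}
    (μ₁ : A → ℝ≥0∞) (μ₂ : B → ℝ≥0∞) (h₁ : SubDist μ₁) (h₂ : SubDist μ₂)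
    (R : A → B → Prop) (ε δ : ℝ) (hε : 0 ≤ ε) (hδ : 0 ≤ δ) :
    OneLift ε δ μ₁ μ₂ R ↔ StarLift ε δ μ₁ μ₂ R := by
  exact ⟨oneLift_to_starLift μ₁ μ₂ h₁ h₂ R ε δ hε, starLift_to_oneLift μ₁ μ₂ h₁ h₂ R ε δ hε⟩
end
end

section
/- (Normalizing witnesses.) If μ₁ ∈ SubDist(A) and μ₂ ∈ SubDist(B) admit an (ε,δ)-approximate ⋆-lifting for R, then there exist witnesses η_L, η_R for this lifting such that for all (a,b) ∈ A × B (excluding ⋆), η_R(a,b) ≤ η_L(a,b) ≤ e^ε · η_R(a,b). -/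
open scoped ENNReal

noncomputable section

lemma tsum_option_eq {X : Type*} (g : Option X → ℝ≥0∞) :
    ∑' o : Option X, g o = g none + ∑' x : X, g (some x) := by
  rw [ENNReal.tsum_eq_add_tsum_ite (none : Option X)]
  congr 1
  rw [← (Option.some_injective X).tsum_eq (by
      intro o ho
      rcases o with _ | x
      · simp [Function.mem_support] at ho
      · exact ⟨x, rfl⟩)]
  exact tsum_congr fun x => if_neg (Option.some_ne_none x)

lemma tsum_sub' {X : Type*} {f g : X → ℝ≥0∞} (h₁ : ∑' x, g x ≠ ∞) (h₂ : ∀ x, g x ≤ f x) :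
    ∑' x, (f x - g x) = ∑' x, f x - ∑' x, g x :=
  ENNReal.eq_sub_of_add_eq h₁ <| by
    rw [← ENNReal.tsum_add]
    exact tsum_congr fun x => tsub_add_cancel_of_le (h₂ x)

lemma tsum_prod_eq {X Y : Type*} (f : X × Y → ℝ≥0∞) :
    ∑' p : X × Y, f p = ∑' x, ∑' y, f (x, y) :=
  ENNReal.tsum_prod (f := fun x y => f (x, y))

lemma mass_le_tsum {A : Type*} (μ : A → ℝ≥0∞) (E : Set A) : mass μ E ≤ ∑' x, μ x :=
  ENNReal.tsum_comp_le_tsum_of_injective Subtype.val_injective μ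

lemma dpDiv_le_tsum {C : Type*} (ε : ℝ) (μ ν : C → ℝ≥0∞) :
    dpDiv ε μ ν ≤ ∑' p, (μ p - ENNReal.ofReal (Real.exp ε) * ν p) := by
  set K := ENNReal.ofReal (Real.exp ε) with hK
  refine iSup_le fun E => ?_
  rw [tsub_le_iff_right]
  calc mass μ E = ∑' p : E, μ ↑p := rfl
    _ ≤ ∑' p : E, ((μ ↑p - K * ν ↑p) + K * ν ↑p) :=
        ENNReal.tsum_le_tsum fun p => le_tsub_add
    _ = ∑' p : E, (μ ↑p - K * ν ↑p) + ∑' p : E, K * ν ↑p := ENNReal.tsum_add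
    _ ≤ ∑' p, (μ p - K * ν p) + K * mass ν E := by
        refine add_le_add (mass_le_tsum (fun p => μ p - K * ν p) E) (le_of_eq ?_)
        exact ENNReal.tsum_mul_left

lemma tsum_le_dpDiv {C : Type*} (ε : ℝ) (μ ν : C → ℝ≥0∞) (hν : ∑' p, ν p ≠ ∞) :
    ∑' p, (μ p - ENNReal.ofReal (Real.exp ε) * ν p) ≤ dpDiv ε μ ν := by
  classical
  set K := ENNReal.ofReal (Real.exp ε) with hK
  set E : Set C := {p | K * ν p < μ p} with hE
  have hνE : K * mass ν E ≠ ∞ :=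
    ENNReal.mul_ne_top ENNReal.ofReal_ne_top (ne_top_of_le_ne_top hν (mass_le_tsum ν E))
  have h1 : ∑' p : E, (μ ↑p - K * ν ↑p) = ∑' p, (μ p - K * ν p) := by
    rw [tsum_subtype E (fun p => μ p - K * ν p)]
    refine tsum_congr fun p => ?_
    by_cases hp : p ∈ E
    · rw [Set.indicator_of_mem hp]
    · rw [Set.indicator_of_notMem hp]
      exact (tsub_eq_zero_of_le (not_lt.1 hp)).symm
  have h2 : ∑' p : E, (μ ↑p - K * ν ↑p) = mass μ E - K * mass ν E := by
    refine ENNReal.eq_sub_of_add_eq hνE ?_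
    rw [show K * mass ν E = ∑' p : E, K * ν ↑p from (ENNReal.tsum_mul_left).symm,
      ← ENNReal.tsum_add]
    exact tsum_congr fun p => tsub_add_cancel_of_le (le_of_lt p.2)
  rw [← h1, h2]
  exact le_iSup (fun E => mass μ E - K * mass ν E) E

theorem starLift_normalized_witnesses {A B : Type*}
    (μ₁ : A → ℝ≥0∞) (μ₂ : B → ℝ≥0∞) (h₁ : SubDist μ₁) (h₂ : SubDist μ₂)
    (R : A → B → Prop) (ε δ : ℝ) (hε : 0 ≤ ε) (hδ : 0 ≤ δ)
    (h : StarLift ε δ μ₁ μ₂ R) :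
    ∃ ηL ηR, IsStarWitness ε δ μ₁ μ₂ R ηL ηR ∧
      ∀ a b, ηR (some a, b) ≤ ηL (a, some b) ∧
        ηL (a, some b) ≤ ENNReal.ofReal (Real.exp ε) * ηR (some a, b) := by
  obtain ⟨ηL, ηR, hSL, hSR, hm1, hm2, hsuppL, hsuppR, hdp⟩ := h
  set K := ENNReal.ofReal (Real.exp ε) with hKdef
  have hK1 : (1 : ℝ≥0∞) ≤ K := by
    rw [hKdef, ENNReal.one_le_ofReal]
    exact Real.one_le_exp hε
  set m : A → B → ℝ≥0∞ := fun a b => min (ηL (a, some b)) (K * ηR (some a, b)) with hm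
  set n : A → B → ℝ≥0∞ := fun a b => min (ηR (some a, b)) (ηL (a, some b)) with hn
  set ηL' : A × Option B → ℝ≥0∞ :=
    fun p => p.2.elim (μ₁ p.1 - ∑' b : B, m p.1 b) (fun b => m p.1 b) with hLdef
  set ηR' : Option A × B → ℝ≥0∞ :=
    fun p => p.1.elim (μ₂ p.2 - ∑' a : A, n a p.2) (fun a => n a p.2) with hRdef
  -- basic row identities for the original witnesses
  have hrowL : ∀ a, ηL (a, none) + ∑' b : B, ηL (a, some b) = μ₁ a := fun a => by
    rw [← tsum_option_eq (fun ob => ηL (a, ob))]; exact hm1 a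
  have hrowR : ∀ b, ηR (none, b) + ∑' a : A, ηR (some a, b) = μ₂ b := fun b => by
    rw [← tsum_option_eq (fun oa => ηR (oa, b))]; exact hm2 b
  have hμ₁fin : ∀ a, μ₁ a ≠ ∞ := fun a =>
    ne_top_of_le_ne_top ENNReal.one_ne_top
      (le_trans (ENNReal.le_tsum a) (le_trans (le_of_eq (tsum_univ μ₁).symm) h₁))
  have hmleL : ∀ a b, m a b ≤ ηL (a, some b) := fun a b => min_le_left _ _
  have hnleR : ∀ a b, n a b ≤ ηR (some a, b) := fun a b => min_le_left _ _
  have htL : ∀ a, ∑' b : B, ηL (a, some b) ≤ μ₁ a := fun a => by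
    rw [← hrowL a]; exact le_add_self
  have htR : ∀ b, ∑' a : A, ηR (some a, b) ≤ μ₂ b := fun b => by
    rw [← hrowR b]; exact le_add_self
  have hsL : ∀ a, ∑' b : B, m a b ≤ μ₁ a := fun a =>
    le_trans (ENNReal.tsum_le_tsum fun b => hmleL a b) (htL a)
  have hsR : ∀ b, ∑' a : A, n a b ≤ μ₂ b := fun b =>
    le_trans (ENNReal.tsum_le_tsum fun a => hnleR a b) (htR b)
  -- marginals of the new witnesses
  have hm1' : ∀ a, (∑' ob : Option B, ηL' (a, ob)) = μ₁ a := fun a => by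
    rw [tsum_option_eq (fun ob => ηL' (a, ob))]
    exact tsub_add_cancel_of_le (hsL a)
  have hm2' : ∀ b, (∑' oa : Option A, ηR' (oa, b)) = μ₂ b := fun b => by
    rw [tsum_option_eq (fun oa => ηR' (oa, b))]
    exact tsub_add_cancel_of_le (hsR b)
  -- subdistribution properties
  have hSL' : SubDist ηL' := by
    show mass ηL' Set.univ ≤ 1
    rw [mass, tsum_univ ηL', tsum_prod_eq ηL']
    calc ∑' a, ∑' ob, ηL' (a, ob) = ∑' a, μ₁ a := tsum_congr fun a => hm1' a
      _ = mass μ₁ Set.univ := (tsum_univ μ₁).symm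
      _ ≤ 1 := h₁
  have hSR' : SubDist ηR' := by
    show mass ηR' Set.univ ≤ 1
    rw [mass, tsum_univ ηR', tsum_prod_eq ηR', ENNReal.tsum_comm]
    calc ∑' b, ∑' oa, ηR' (oa, b) = ∑' b, μ₂ b := tsum_congr fun b => hm2' b
      _ = mass μ₂ Set.univ := (tsum_univ μ₂).symm
      _ ≤ 1 := h₂
  -- supports
  have hsuppL' : ∀ a b, ηL' (a, some b) ≠ 0 → R a b := by
    intro a b hne
    refine hsuppL a b fun h0 => hne ?_
    show m a b = 0
    rw [hm]; simp [h0]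
  have hsuppR' : ∀ a b, ηR' (some a, b) ≠ 0 → R a b := by
    intro a b hne
    refine hsuppR a b fun h0 => hne ?_
    show n a b = 0
    rw [hn]; simp [h0]
  -- the normalization inequalities
  have hnorm : ∀ a b, ηR' (some a, b) ≤ ηL' (a, some b) ∧
      ηL' (a, some b) ≤ K * ηR' (some a, b) := by
    intro a b
    constructor
    · show n a b ≤ m a b
      exact le_min (min_le_right _ _)
        (le_trans (min_le_left _ _) (le_mul_of_one_le_left zero_le hK1))
    · show m a b ≤ K * n a b
      rcases le_total (ηR (some a, b)) (ηL (a, some b)) with hle | hle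
      · rw [hn]; simp only [min_eq_left hle]
        exact min_le_right _ _
      · rw [hn]; simp only [min_eq_right hle]
        exact le_trans (min_le_left _ _) (le_mul_of_one_le_left zero_le hK1)
  -- the divergence bound
  have hdp' : dpDiv ε (extL ηL') (extR ηR') ≤ ENNReal.ofReal δ := by
    have hνfin : ∑' p : Option A × Option B, extR ηR p ≠ ∞ := by
      have : ∑' p : Option A × Option B, extR ηR p = ∑' q : Option A × B, ηR q := by
        rw [tsum_prod_eq (extR ηR), tsum_prod_eq ηR]
        refine tsum_congr fun oa => ?_
        rw [tsum_option_eq (fun ob => extR ηR (oa, ob))]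
        simp [extR]
      rw [this]
      exact ne_top_of_le_ne_top ENNReal.one_ne_top
        (le_trans (le_of_eq (tsum_univ ηR).symm) hSR)
    have hkey : ∑' p : Option A × Option B, (extL ηL' p - K * extR ηR' p)
        = ∑' p : Option A × Option B, (extL ηL p - K * extR ηR p) := by
      rw [tsum_prod_eq (fun p => extL ηL' p - K * extR ηR' p),
        tsum_prod_eq (fun p => extL ηL p - K * extR ηR p)]
      refine tsum_congr fun oa => ?_
      rcases oa with _ | a
      · refine tsum_congr fun ob => ?_
        show (0 : ℝ≥0∞) - _ = (0 : ℝ≥0∞) - _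
        rw [zero_tsub, zero_tsub]
      · rw [tsum_option_eq (fun ob => extL ηL' (some a, ob) - K * extR ηR' (some a, ob)),
          tsum_option_eq (fun ob => extL ηL (some a, ob) - K * extR ηR (some a, ob))]
        have e1 : extL ηL' (some a, none) - K * extR ηR' (some a, none) = ηL' (a, none) := by
          show ηL' (a, none) - K * 0 = ηL' (a, none)
          rw [mul_zero, tsub_zero]
        have e2 : extL ηL (some a, none) - K * extR ηR (some a, none) = ηL (a, none) := by
          show ηL (a, none) - K * 0 = ηL (a, none)
          rw [mul_zero, tsub_zero]
        have e3 : ∀ b, extL ηL' (some a, some b) - K * extR ηR' (some a, some b) = 0 := by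
          intro b
          show m a b - K * n a b = 0
          refine tsub_eq_zero_of_le ?_
          rcases le_total (ηR (some a, b)) (ηL (a, some b)) with hle | hle
          · rw [hn]; simp only [min_eq_left hle]
            exact min_le_right _ _
          · rw [hn]; simp only [min_eq_right hle]
            exact le_trans (min_le_left _ _) (le_mul_of_one_le_left zero_le hK1)
        have e4 : ∀ b, extL ηL (some a, some b) - K * extR ηR (some a, some b)
            = ηL (a, some b) - K * ηR (some a, b) := fun b => rfl
        rw [e1, e2]
        rw [tsum_congr e3, tsum_congr e4, tsum_zero, add_zero]
        -- now: ηL' (a, none) = ηL (a, none) + ∑' b, (ηL (a, some b) - K * ηR (some a, b))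
        have hsfin : ∑' b : B, m a b ≠ ∞ :=
          ne_top_of_le_ne_top (hμ₁fin a) (hsL a)
        have hdiff : ∀ b, ηL (a, some b) - K * ηR (some a, b) = ηL (a, some b) - m a b :=
          fun b => (tsub_min (a := ηL (a, some b)) (b := K * ηR (some a, b))).symm
        calc ηL' (a, none) = μ₁ a - ∑' b : B, m a b := rfl
          _ = (ηL (a, none) + ∑' b : B, ηL (a, some b)) - ∑' b : B, m a b := by
              rw [hrowL a]
          _ = ηL (a, none) + (∑' b : B, ηL (a, some b) - ∑' b : B, m a b) :=
              (ENNReal.eq_sub_of_add_eq hsfin (by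
                rw [add_assoc,
                  tsub_add_cancel_of_le (ENNReal.tsum_le_tsum fun b => hmleL a b)])).symm
          _ = ηL (a, none) + ∑' b : B, (ηL (a, some b) - m a b) := by
              rw [tsum_sub' hsfin (fun b => hmleL a b)]
          _ = ηL (a, none) + ∑' b : B, (ηL (a, some b) - K * ηR (some a, b)) := by
              rw [tsum_congr hdiff]
    calc dpDiv ε (extL ηL') (extR ηR')
        ≤ ∑' p : Option A × Option B, (extL ηL' p - K * extR ηR' p) :=
          dpDiv_le_tsum ε _ _
      _ = ∑' p : Option A × Option B, (extL ηL p - K * extR ηR p) := hkey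
      _ ≤ dpDiv ε (extL ηL) (extR ηR) := tsum_le_dpDiv ε _ _ hνfin
      _ ≤ ENNReal.ofReal δ := hdp
  exact ⟨ηL', ηR', ⟨hSL', hSR', hm1', hm2', hsuppL', hsuppR', hdp'⟩, hnorm⟩
end
end
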